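/- Let R be a nontrivial commutative ring, σ a type (of edge labels), and S : Fin n → Finset σ a family of edge sets such that for all k ≠ k', S k' is not a subset of S k. For each path k define the path monomial P_k = ∏_{e ∈ S k} X_e in the multivariate polynomial ring over R with variables indexed by σ. Then for any two distinct subsets T, T' of Fin n, the polynomials Σ_{k ∈ T} P_k and Σ_{k ∈ T'} P_k are distinct; equivalently, for any two distinct vectors x, y ∈ {0,1}^n the polynomial Σ_k (x_k − y_k)·P_k is not the zero polynomial. -/

import Mathlib

open MvPolynomial

lemma prod_X_eq_monomial' {R σ : Type*} [CommRing R] (s : Finset σ) :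
    (∏ e ∈ s, (MvPolynomial.X e : MvPolynomial σ R)) =
      MvPolynomial.monomial (∑ e ∈ s, Finsupp.single e 1) 1 := by
  classical
  induction s using Finset.induction_on with
  | empty => simp [MvPolynomial.monomial_zero']
  | insert _ _ h ih =>
      rw [Finset.prod_insert h, Finset.sum_insert h, ih, MvPolynomial.X,
        MvPolynomial.monomial_mul, one_mul]

lemma apply_sum_single {σ : Type*} [DecidableEq σ] (s : Finset σ) (a : σ) :
    (∑ e ∈ s, Finsupp.single e 1 : σ →₀ ℕ) a = if a ∈ s then 1 else 0 := by
  classical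
  rw [Finsupp.finset_sum_apply]
  simp [Finsupp.single_apply, Finset.sum_ite_eq' s a (fun _ => 1)]

/-- Distinct subsets of surviving paths lead to distinct probe polynomials:
if the edge sets of the paths form an antichain under inclusion, then the sums
of path monomials over two distinct subsets of paths are distinct polynomials. -/
theorem distinct_path_subsets_distinct_probes
    (R : Type*) [CommRing R] [Nontrivial R] (σ : Type*) (n : ℕ)
    (S : Fin n → Finset σ)
    (hS : ∀ k k' : Fin n, k ≠ k' → ¬ S k' ⊆ S k)
    (T T' : Finset (Fin n)) (hTT' : T ≠ T') :
    (∑ k ∈ T, ∏ e ∈ S k, (MvPolynomial.X e : MvPolynomial σ R)) ≠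
      ∑ k ∈ T', ∏ e ∈ S k, (MvPolynomial.X e : MvPolynomial σ R) := by
  classical
  set D : Fin n → (σ →₀ ℕ) := fun k => ∑ e ∈ S k, Finsupp.single e 1 with hD
  have hDinj : Function.Injective D := by
    intro k k' h
    by_contra hne
    apply hS k k' hne
    intro a ha
    have := DFunLike.congr_fun h a
    simp only [hD, apply_sum_single] at this
    by_contra ha'
    simp [ha, ha'] at this
  intro h
  apply hTT'
  ext k
  have hc := congrArg (MvPolynomial.coeff (D k)) h
  simp only [prod_X_eq_monomial', ← hD, MvPolynomial.coeff_sum,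
    MvPolynomial.coeff_monomial] at hc
  have key : ∀ (U : Finset (Fin n)),
      (∑ x ∈ U, if D x = D k then (1:R) else 0) = if k ∈ U then 1 else 0 := by
    intro U
    simp [hDinj.eq_iff, Finset.sum_ite_eq' U k (fun _ => (1:R))]
  have hc' : (if k ∈ T then (1:R) else 0) = if k ∈ T' then 1 else 0 := by
    rw [← key T, ← key T']
    exact hc
  by_cases h1 : k ∈ T <;> by_cases h2 : k ∈ T' <;>
    simp_all [one_ne_zero]
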